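/- Correspondence between big-step evaluation and calculation steps (Lemma 4 of the paper, for integer expressions): for every assignment σ : V → ℤ, every expression e : Expr V, and every integer n, Eval σ e n holds if and only if Relation.ReflTransGen gstep (subst σ e) (const n) holds. -/

import Mathlib

inductive Expr (V : Type) : Type
  | const : ℤ → Expr V
  | var : V → Expr V
  | add : Expr V → Expr V → Expr V
  | sub : Expr V → Expr V → Expr V

open Expr

inductive Eval {V : Type} (σ : V → ℤ) : Expr V → ℤ → Prop
  | const (n : ℤ) : Eval σ (const n) n
  | var (v : V) : Eval σ (var v) (σ v)
  | add {e₁ e₂ : Expr V} {n₁ n₂ : ℤ} :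
      Eval σ e₁ n₁ → Eval σ e₂ n₂ → Eval σ (add e₁ e₂) (n₁ + n₂)
  | sub {e₁ e₂ : Expr V} {n₁ n₂ : ℤ} :
      Eval σ e₁ n₁ → Eval σ e₂ n₂ → Eval σ (sub e₁ e₂) (n₁ - n₂)

inductive BExpr (V : Type) : Type
  | btrue : BExpr V
  | bfalse : BExpr V
  | eqE : Expr V → Expr V → BExpr V
  | ltE : Expr V → Expr V → BExpr V
  | notE : BExpr V → BExpr V
  | orE : BExpr V → BExpr V → BExpr V

open BExpr

inductive BEval {V : Type} (σ : V → ℤ) : BExpr V → Bool → Prop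
  | btrue : BEval σ btrue true
  | bfalse : BEval σ bfalse false
  | eqE {e₁ e₂ : Expr V} {n₁ n₂ : ℤ} :
      Eval σ e₁ n₁ → Eval σ e₂ n₂ → BEval σ (eqE e₁ e₂) (decide (n₁ = n₂))
  | ltE {e₁ e₂ : Expr V} {n₁ n₂ : ℤ} :
      Eval σ e₁ n₁ → Eval σ e₂ n₂ → BEval σ (ltE e₁ e₂) (decide (n₁ < n₂))
  | notE {φ : BExpr V} {b : Bool} : BEval σ φ b → BEval σ (notE φ) (!b)
  | orE {φ₁ φ₂ : BExpr V} {b₁ b₂ : Bool} :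
      BEval σ φ₁ b₁ → BEval σ φ₂ b₂ → BEval σ (orE φ₁ φ₂) (b₁ || b₂)

def subst {V : Type} (σ : V → ℤ) : Expr V → Expr V
  | .const n => .const n
  | .var v => .const (σ v)
  | .add e₁ e₂ => .add (subst σ e₁) (subst σ e₂)
  | .sub e₁ e₂ => .sub (subst σ e₁) (subst σ e₂)

inductive gstep {V : Type} : Expr V → Expr V → Prop
  | calc_add (m n : ℤ) : gstep (add (const m) (const n)) (const (m+n))
  | calc_sub (m n : ℤ) : gstep (sub (const m) (const n)) (const (m-n))
  | add_cong_left {e e' : Expr V} (u : Expr V) : gstep e e' → gstep (add e u) (add e' u)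
  | add_cong_right {e e' : Expr V} (u : Expr V) : gstep e e' → gstep (add u e) (add u e')
  | sub_cong_left {e e' : Expr V} (u : Expr V) : gstep e e' → gstep (sub e u) (sub e' u)
  | sub_cong_right {e e' : Expr V} (u : Expr V) : gstep e e' → gstep (sub u e) (sub u e')

lemma gsteps_add_left {V : Type} {a a' : Expr V} (u : Expr V)
    (h : Relation.ReflTransGen gstep a a') :
    Relation.ReflTransGen gstep (add a u) (add a' u) :=
  Relation.ReflTransGen.lift (fun x => add x u) (fun _ _ h => gstep.add_cong_left u h) _ _ h

lemma gsteps_add_right {V : Type} {a a' : Expr V} (u : Expr V)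
    (h : Relation.ReflTransGen gstep a a') :
    Relation.ReflTransGen gstep (add u a) (add u a') :=
  Relation.ReflTransGen.lift (fun x => add u x) (fun _ _ h => gstep.add_cong_right u h) _ _ h

lemma gsteps_sub_left {V : Type} {a a' : Expr V} (u : Expr V)
    (h : Relation.ReflTransGen gstep a a') :
    Relation.ReflTransGen gstep (sub a u) (sub a' u) :=
  Relation.ReflTransGen.lift (fun x => sub x u) (fun _ _ h => gstep.sub_cong_left u h) _ _ h

lemma gsteps_sub_right {V : Type} {a a' : Expr V} (u : Expr V)
    (h : Relation.ReflTransGen gstep a a') :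
    Relation.ReflTransGen gstep (sub u a) (sub u a') :=
  Relation.ReflTransGen.lift (fun x => sub u x) (fun _ _ h => gstep.sub_cong_right u h) _ _ h

lemma gstep_eval_back {V : Type} {σ : V → ℤ} {e e' : Expr V} (h : gstep e e') :
    ∀ n, Eval σ e' n → Eval σ e n := by
  induction h with
  | calc_add m k => intro n hn; cases hn; exact Eval.add (.const m) (.const k)
  | calc_sub m k => intro n hn; cases hn; exact Eval.sub (.const m) (.const k)
  | add_cong_left u _ ih => intro n hn; cases hn with
    | add h1 h2 => exact Eval.add (ih _ h1) h2
  | add_cong_right u _ ih => intro n hn; cases hn with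
    | add h1 h2 => exact Eval.add h1 (ih _ h2)
  | sub_cong_left u _ ih => intro n hn; cases hn with
    | sub h1 h2 => exact Eval.sub (ih _ h1) h2
  | sub_cong_right u _ ih => intro n hn; cases hn with
    | sub h1 h2 => exact Eval.sub h1 (ih _ h2)

lemma eval_subst {V : Type} {σ : V → ℤ} (e : Expr V) {n : ℤ}
    (h : Eval σ (subst σ e) n) : Eval σ e n := by
  induction e generalizing n with
  | const m => exact h
  | var v => cases h; exact Eval.var v
  | add e₁ e₂ ih₁ ih₂ => cases h with
    | add h1 h2 => exact Eval.add (ih₁ h1) (ih₂ h2)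
  | sub e₁ e₂ ih₁ ih₂ => cases h with
    | sub h1 h2 => exact Eval.sub (ih₁ h1) (ih₂ h2)

theorem stmt_17 {V : Type} (σ : V → ℤ) (e : Expr V) (n : ℤ) :
    Eval σ e n ↔ Relation.ReflTransGen gstep (subst σ e) (const n) := by
  constructor
  · intro h
    induction h with
    | const m => exact .refl
    | var v => exact .refl
    | add h1 h2 ih1 ih2 =>
        exact (((gsteps_add_left _ ih1).trans (gsteps_add_right _ ih2)).tail
          (gstep.calc_add _ _))
    | sub h1 h2 ih1 ih2 =>
        exact (((gsteps_sub_left _ ih1).trans (gsteps_sub_right _ ih2)).tail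
          (gstep.calc_sub _ _))
  · intro h
    apply eval_subst
    generalize subst σ e = a at h ⊢
    induction h using Relation.ReflTransGen.head_induction_on with
    | refl => exact Eval.const n
    | head hstep _ ih => exact gstep_eval_back hstep n ih
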